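/- A dimaze (D, B_0) satisfies the property that the maximal linkable sets are exactly the sets linkable onto B_0 if and only if its converted bimaze (D, B_0)^⋆ satisfies the property that the maximal m_0-matchable sets are exactly the sets m_0-matchable onto (V \ B_0)^⋆. -/

import Mathlib

open Set


/-- A finite directed path/walk or a ray, encoded by a vertex function and a length:
the number of edges, `⊤` for a ray. Only indices `≤ len` are meaningful. -/
structure DiWalk (V : Type*) where
  vtx : ℕ → V
  len : ℕ∞

namespace DiWalk

variable {V : Type*} (w : DiWalk V)

/-- The vertices of the walk. -/
def support : Set V := {v | ∃ i : ℕ, (i : ℕ∞) ≤ w.len ∧ w.vtx i = v}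

/-- The directed edges of the walk. -/
def edges : Set (V × V) := {e | ∃ i : ℕ, (i : ℕ∞) + 1 ≤ w.len ∧ e = (w.vtx i, w.vtx (i + 1))}

/-- The initial vertex. -/
def Ini : V := w.vtx 0

/-- The terminal vertex (meaningful for finite walks). -/
def Ter : V := w.vtx w.len.toNat

/-- `w` is a ray, i.e. one-way infinite. -/
def IsRay : Prop := w.len = ⊤

/-- `w` is a (finite) directed path or a directed ray in the digraph `D`: consecutive
vertices are joined by edges of `D` and no vertex is repeated. -/
def IsPathIn (D : V → V → Prop) : Prop :=
  (∀ i : ℕ, (i : ℕ∞) + 1 ≤ w.len → D (w.vtx i) (w.vtx (i + 1))) ∧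
  (∀ i j : ℕ, (i : ℕ∞) ≤ w.len → (j : ℕ∞) ≤ w.len → w.vtx i = w.vtx j → i = j)

end DiWalk

variable {V : Type*}

/-- The vertex set of a family of walks. -/
def VSet (Q : Set (DiWalk V)) : Set V := ⋃ q ∈ Q, q.support

/-- The edge set of a family of walks. -/
def ESet (Q : Set (DiWalk V)) : Set (V × V) := ⋃ q ∈ Q, q.edges

/-- The set of initial vertices of a family of walks. -/
def IniSet (Q : Set (DiWalk V)) : Set V := DiWalk.Ini '' Q

/-- The set of terminal vertices of the finite members of a family of walks. -/
def TerSet (Q : Set (DiWalk V)) : Set V := {v | ∃ q ∈ Q, ¬ q.IsRay ∧ q.Ter = v}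

/-- The members of `Q` are pairwise vertex-disjoint. -/
def PairwiseDisjointWalks (Q : Set (DiWalk V)) : Prop :=
  ∀ p ∈ Q, ∀ q ∈ Q, p ≠ q → Disjoint p.support q.support

/-- `Q` is a set of pairwise disjoint directed paths or rays in `D`. -/
def IsPathSystem (D : V → V → Prop) (Q : Set (DiWalk V)) : Prop :=
  (∀ q ∈ Q, q.IsPathIn D) ∧ PairwiseDisjointWalks Q

/-- A linkage in the dimaze `(D, B0)`: a set of pairwise disjoint finite directed paths
ending in `B0`. -/
def IsLinkage (D : V → V → Prop) (B0 : Set V) (Q : Set (DiWalk V)) : Prop :=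
  IsPathSystem D Q ∧ ∀ q ∈ Q, ¬ q.IsRay ∧ q.Ter ∈ B0

/-- `I` is linkable to `B0` in `(D, B0)`. -/
def Linkable (D : V → V → Prop) (B0 : Set V) (I : Set V) : Prop :=
  ∃ Q, IsLinkage D B0 Q ∧ IniSet Q = I

/-- `I` is linkable onto `B0`: some linkage from `I` has terminal vertex set exactly `B0`. -/
def LinkableOnto (D : V → V → Prop) (B0 : Set V) (I : Set V) : Prop :=
  ∃ Q, IsLinkage D B0 Q ∧ IniSet Q = I ∧ TerSet Q = B0

/-- `B0` is a set of sinks of `D`. -/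
def IsDimaze (D : V → V → Prop) (B0 : Set V) : Prop := ∀ b ∈ B0, ∀ v, ¬ D b v

/-- `v` is the centre of a linking fan: infinitely many non-trivial directed paths to `B0`
from `v`, pairwise meeting only in `v`. -/
def IsFanCentre (D : V → V → Prop) (B0 : Set V) (v : V) : Prop :=
  ∃ P : Set (DiWalk V), P.Infinite ∧
    (∀ p ∈ P, p.IsPathIn D ∧ ¬ p.IsRay ∧ 1 ≤ p.len ∧ p.Ini = v ∧ p.Ter ∈ B0) ∧
    (∀ p ∈ P, ∀ q ∈ P, p ≠ q → p.support ∩ q.support ⊆ {v})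

/-- The ray `R` is the spine of an outgoing comb with teeth ending in `B0`: there are
infinitely many pairwise disjoint non-trivial paths from distinct vertices of `R` to `B0`,
each meeting `R` exactly in its initial vertex. -/
def IsSpine (D : V → V → Prop) (B0 : Set V) (R : DiWalk V) : Prop :=
  R.IsPathIn D ∧ R.IsRay ∧
  ∃ P : Set (DiWalk V), P.Infinite ∧
    (∀ p ∈ P, p.IsPathIn D ∧ ¬ p.IsRay ∧ 1 ≤ p.len ∧ p.Ini ∈ R.support ∧ p.Ter ∈ B0 ∧
      p.support ∩ R.support = {p.Ini}) ∧
    PairwiseDisjointWalks P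

/-- `(D, B0)` contains no subdivision of an outgoing comb. -/
def COFree (D : V → V → Prop) (B0 : Set V) : Prop := ¬ ∃ R, IsSpine D B0 R

/-- `(D, B0)` contains no subdivision of a linking fan. -/
def FanFree (D : V → V → Prop) (B0 : Set V) : Prop := ¬ ∃ v, IsFanCentre D B0 v

/-- A topological path in `(D, B0)`. -/
def IsTopPath (D : V → V → Prop) (B0 : Set V) (w : DiWalk V) : Prop :=
  w.IsPathIn D ∧
    ((¬ w.IsRay ∧ w.Ter ∈ B0) ∨ (¬ w.IsRay ∧ IsFanCentre D B0 w.Ter) ∨ IsSpine D B0 w)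

/-- `I` is topologically linkable in `(D, B0)`. -/
def TopLinkable (D : V → V → Prop) (B0 : Set V) (I : Set V) : Prop :=
  ∃ Q : Set (DiWalk V), (∀ q ∈ Q, IsTopPath D B0 q) ∧ PairwiseDisjointWalks Q ∧ IniSet Q = I
section Bipartite

variable {V W : Type*}

/-- `m` is a matching in the bipartite graph with edge set `E ⊆ V × W`. -/
def IsBipMatching (E m : Set (V × W)) : Prop :=
  m ⊆ E ∧ ∀ p ∈ m, ∀ q ∈ m, (p.1 = q.1 ∨ p.2 = q.2) → p = q

/-- `I ⊆ V` is matchable in the bipartite graph with edge set `E`. -/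
def Matchable (E : Set (V × W)) (I : Set V) : Prop :=
  ∃ m, IsBipMatching E m ∧ Prod.fst '' m = I

/-- One step along an edge of `F` in the bipartite graph, on vertex type `V ⊕ W`. -/
def bipStep (F : Set (V × W)) : (V ⊕ W) → (V ⊕ W) → Prop := fun a b =>
  match a, b with
  | Sum.inl v, Sum.inr w => (v, w) ∈ F
  | Sum.inr w, Sum.inl v => (v, w) ∈ F
  | _, _ => False

/-- Every connected component of the bipartite graph with edge set `F` is finite. -/
def FiniteComponents (F : Set (V × W)) : Prop :=
  ∀ x : V ⊕ W, {y | Relation.ReflTransGen (bipStep F) x y}.Finite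

/-- `m` is an `m0`-matching: a matching such that every component of `m0 ∪ m` is finite. -/
def IsM0Matching (E m0 m : Set (V × W)) : Prop :=
  IsBipMatching E m ∧ FiniteComponents (m0 ∪ m)

/-- `I` is `m0`-matchable. -/
def M0Matchable (E m0 : Set (V × W)) (I : Set V) : Prop :=
  ∃ m, IsM0Matching E m0 m ∧ Prod.fst '' m = I

/-- `I` is `m0`-matchable onto `W'`. -/
def M0MatchableOnto (E m0 : Set (V × W)) (I : Set V) (W' : Set W) : Prop :=
  ∃ m, IsM0Matching E m0 m ∧ Prod.fst '' m = I ∧ Prod.snd '' m = W'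

end Bipartite

section Star

variable {V : Type*}

/-- The edge set of the converted bimaze of the dimaze `(D, B0)`: the right class is
`{v ∣ v ∉ B0}` (representing `(V \ B0)⋆`) and the edges are the identity matching
together with `v u⋆` for every edge `(u, v)` of `D`. -/
def starEdges (D : V → V → Prop) (B0 : Set V) : Set (V × V) :=
  {p | (p.1 = p.2 ∧ p.2 ∉ B0) ∨ (D p.2 p.1 ∧ p.2 ∉ B0)}

/-- The identity matching of the converted bimaze. -/
def starM0 (B0 : Set V) : Set (V × V) := {p | p.1 = p.2 ∧ p.1 ∉ B0}

end Star

/-- The property `(†)` of a dimaze: the maximal linkable sets are exactly the sets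
linkable onto `B0`. -/
def DaggerProp {V : Type*} (D : V → V → Prop) (B0 : Set V) : Prop :=
  ∀ I, (Linkable D B0 I ∧ ∀ I', Linkable D B0 I' → I ⊆ I' → I = I') ↔ LinkableOnto D B0 I

/-- The property `(‡)` of a bimaze: the maximal `m0`-matchable sets are exactly the sets
`m0`-matchable onto the right class `Wcl`. -/
def DDaggerProp {V W : Type*} (E m0 : Set (V × W)) (Wcl : Set W) : Prop :=
  ∀ I, (M0Matchable E m0 I ∧ ∀ I', M0Matchable E m0 I' → I ⊆ I' → I = I') ↔
    M0MatchableOnto E m0 I Wcl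

section DaggerAux

open Relation

variable {V : Type*}

lemma bipStep_mono' {F G : Set (V × V)} (h : F ⊆ G) {a b : V ⊕ V} (hs : bipStep F a b) :
    bipStep G a b := by
  cases a <;> cases b <;> first | exact hs.elim | exact h hs

lemma reach_mono' {F G : Set (V × V)} (h : F ⊆ G) {a b : V ⊕ V}
    (hr : ReflTransGen (bipStep F) a b) : ReflTransGen (bipStep G) a b :=
  ReflTransGen.mono (fun _ _ hs => bipStep_mono' h hs) _ _ hr

lemma finiteComponents_mono' {F G : Set (V × V)} (h : F ⊆ G) (hG : FiniteComponents G) :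
    FiniteComponents F := fun x => (hG x).subset (fun _ hz => reach_mono' h hz)

lemma reach_closed' {F : Set (V × V)} {S : Set (V ⊕ V)}
    (hcl : ∀ a ∈ S, ∀ b, bipStep F a b → b ∈ S) {x z : V ⊕ V} (hx : x ∈ S)
    (h : ReflTransGen (bipStep F) x z) : z ∈ S := by
  induction h with
  | refl => exact hx
  | tail _ h₂ ih => exact hcl _ ih _ h₂

lemma matching_fst_eq' {E m : Set (V × V)} (hm : IsBipMatching E m) {a b c : V}
    (h1 : (a, b) ∈ m) (h2 : (a, c) ∈ m) : b = c :=
  congrArg Prod.snd (hm.2 _ h1 _ h2 (Or.inl rfl))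

lemma matching_snd_eq' {E m : Set (V × V)} (hm : IsBipMatching E m) {a b c : V}
    (h1 : (a, c) ∈ m) (h2 : (b, c) ∈ m) : a = b :=
  congrArg Prod.fst (hm.2 _ h1 _ h2 (Or.inr rfl))

lemma starEdges_snd' {D : V → V → Prop} {B0 : Set V} {e : V × V}
    (he : e ∈ starEdges D B0) : e.2 ∉ B0 := by
  rcases he with ⟨_, h⟩ | ⟨_, h⟩ <;> exact h

/-- L3: every `m0`-matching extends (on the left) to an onto `m0`-matching. -/
lemma exists_onto_matching_extension {D : V → V → Prop} {B0 : Set V} {m'' : Set (V × V)}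
    (hm : IsM0Matching (starEdges D B0) (starM0 B0) m'') :
    ∃ m, IsM0Matching (starEdges D B0) (starM0 B0) m ∧
      Prod.snd '' m = {v | v ∉ B0} ∧ Prod.fst '' m'' ⊆ Prod.fst '' m := by
  classical
  obtain ⟨hbm, hfin⟩ := hm
  obtain ⟨hsub, huniq⟩ := hbm
  set F := starM0 B0 ∪ m'' with hF
  let Ch : V → V → Prop := fun a b => (a, b) ∈ m''
  let Bad : V → Prop := fun y => y ∉ B0 ∧ ∀ x, (x, y) ∉ m''
  let InL : V → Prop := fun x => ∃ y, Bad y ∧ ReflTransGen (bipStep F) (.inr y) (.inl x)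
  let InR : V → Prop := fun c => ∃ y, Bad y ∧ ReflTransGen (bipStep F) (.inr y) (.inr c)
  -- chain values are not in B0
  have hChnB0 : ∀ {y c : V}, Bad y → ReflTransGen Ch y c → c ∉ B0 := by
    intro y c hy hrtg
    induction hrtg with
    | refl => exact hy.1
    | tail _ h₂ _ => exact starEdges_snd' (hsub h₂)
  -- chain values are reachable in the bipartite graph
  have hChreach : ∀ {y c : V}, Bad y → ReflTransGen Ch y c →
      ReflTransGen (bipStep F) (.inr y) (.inl c) ∧
      ReflTransGen (bipStep F) (.inr y) (.inr c) := by
    intro y c hy hrtg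
    induction hrtg with
    | refl =>
      refine ⟨ReflTransGen.single ?_, ReflTransGen.refl⟩
      exact Or.inl ⟨rfl, hy.1⟩
    | tail h₁ h₂ ih =>
      have hc : _ ∉ B0 := hChnB0 hy (h₁.tail h₂)
      have hR : ReflTransGen (bipStep F) (.inr y) (.inr _) := ih.1.tail (Or.inr h₂)
      exact ⟨hR.tail (Or.inl ⟨rfl, hc⟩), hR⟩
  -- everything reachable from a bad right vertex is a chain value
  have hS : ∀ {y : V} {z : V ⊕ V}, Bad y → ReflTransGen (bipStep F) (.inr y) z →
      ∃ c, ReflTransGen Ch y c ∧ (z = .inl c ∨ z = .inr c) := by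
    intro y z hy hr
    refine reach_closed' (S := {z | ∃ c, ReflTransGen Ch y c ∧ (z = .inl c ∨ z = .inr c)})
      ?_ ⟨y, ReflTransGen.refl, Or.inr rfl⟩ hr
    rintro a ⟨c, hc, ha | ha⟩ b hstep
    · subst ha
      cases b with
      | inl t => exact absurd hstep id
      | inr t =>
        rcases hstep with ⟨h1, _⟩ | h1
        · exact ⟨c, hc, Or.inr (by have h1' : c = t := h1; rw [h1'])⟩
        · exact ⟨t, hc.tail h1, Or.inr rfl⟩
    · subst ha
      cases b with
      | inr t => exact absurd hstep id
      | inl t =>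
        rcases hstep with ⟨h1, _⟩ | h1
        · exact ⟨c, hc, Or.inl (by have h1' : t = c := h1; rw [h1'])⟩
        · rcases hc.cases_tail with rfl | ⟨c', hc', hedge⟩
          · exact absurd h1 (hy.2 t)
          · exact ⟨c', hc', Or.inl (by rw [matching_snd_eq' ⟨hsub, huniq⟩ h1 hedge])⟩
  have hInLkey : ∀ {x : V}, InL x → x ∉ B0 ∧ InR x := by
    rintro x ⟨y, hy, hr⟩
    obtain ⟨c, hc, hcase⟩ := hS hy hr
    rcases hcase with h | h
    · obtain rfl : c = x := by injection h with h'; exact h'.symm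
      exact ⟨hChnB0 hy hc, y, hy, (hChreach hy hc).2⟩
    · exact absurd h (by simp)
  have hLR : ∀ {e : V × V}, e ∈ m'' → InL e.1 → InR e.2 := by
    rintro e he ⟨y, hy, hr⟩
    exact ⟨y, hy, hr.tail (Or.inr (by rwa [Prod.mk.eta]))⟩
  have hRL : ∀ {e : V × V}, e ∈ m'' → InR e.2 → InL e.1 := by
    rintro e he ⟨y, hy, hr⟩
    exact ⟨y, hy, hr.tail (Or.inr (by rwa [Prod.mk.eta]))⟩
  refine ⟨{e | e ∈ m'' ∧ ¬ InL e.1} ∪ {p | ∃ c, p = (c, c) ∧ c ∉ B0 ∧ InR c}, ⟨⟨?_, ?_⟩, ?_⟩, ?_, ?_⟩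
  · rintro e he
    rcases he with he1 | he2
    · exact hsub he1.1
    · obtain ⟨c, rfl, hc, -⟩ := he2
      exact Or.inl ⟨rfl, hc⟩
  · rintro p hpm q hqm hor
    rcases hpm with ⟨hp, hpL⟩ | ⟨c, rfl, hc, hcR⟩ <;> rcases hqm with ⟨hq, hqL⟩ | ⟨c', rfl, hc', hcR'⟩
    · exact huniq p hp q hq hor
    · exfalso; apply hpL
      rcases hor with h | h
      · rcases hcR' with ⟨y, hy, hr⟩
        refine ⟨y, hy, ?_⟩
        have h' : p.1 = c' := h
        rw [h']
        exact hr.tail (Or.inl ⟨rfl, hc'⟩)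
      · have h' : p.2 = c' := h
        exact hRL hp (show InR p.2 by rw [h']; exact hcR')
    · exfalso; apply hqL
      rcases hor with h | h
      · rcases hcR with ⟨y, hy, hr⟩
        refine ⟨y, hy, ?_⟩
        have h' : c = q.1 := h
        rw [← h']
        exact hr.tail (Or.inl ⟨rfl, hc⟩)
      · have h' : c = q.2 := h
        exact hRL hq (show InR q.2 by rw [← h']; exact hcR)
    · obtain h | h := hor <;> simp only [Prod.mk.injEq] <;> exact ⟨h, h⟩
  · apply finiteComponents_mono' _ hfin
    rintro e he
    rcases he with he0 | he1
    · exact Or.inl he0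
    · rcases he1 with he1 | he2
      · exact Or.inr he1.1
      · obtain ⟨c, rfl, hc, -⟩ := he2
        exact Or.inl ⟨rfl, hc⟩
  · apply Set.Subset.antisymm
    · rintro y ⟨e, he, rfl⟩
      rcases he with he1 | he2
      · exact starEdges_snd' (hsub he1.1)
      · obtain ⟨c, rfl, hc, -⟩ := he2
        exact hc
    · intro y hy
      by_cases hcov : ∃ x, (x, y) ∈ m''
      · obtain ⟨x, hx⟩ := hcov
        by_cases hL : InL x
        · have hyR : InR y := hLR hx hL
          exact ⟨(y, y), Or.inr ⟨y, rfl, hy, hyR⟩, rfl⟩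
        · exact ⟨(x, y), Or.inl ⟨hx, hL⟩, rfl⟩
      · push_neg at hcov
        have : InR y := ⟨y, ⟨hy, hcov⟩, ReflTransGen.refl⟩
        exact ⟨(y, y), Or.inr ⟨y, rfl, hy, this⟩, rfl⟩
  · rintro x ⟨e, he, rfl⟩
    by_cases hL : InL e.1
    · obtain ⟨hnB0, hR⟩ := hInLkey hL
      exact ⟨(e.1, e.1), Or.inr ⟨e.1, rfl, hnB0, hR⟩, rfl⟩
    · exact ⟨e, Or.inl ⟨he, hL⟩, rfl⟩


/-! ### L2: from an onto matching to a linkage onto -/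

open Classical in
noncomputable def pRfun (m : Set (V × V)) : V → V :=
  fun y => if h : ∃ x, (x, y) ∈ m then h.choose else y

noncomputable def fseq (m : Set (V × V)) (v : V) : ℕ → V
  | 0 => v
  | (i+1) => pRfun m (fseq m v i)

open Classical in
noncomputable def pLfun (m : Set (V × V)) : V → V :=
  fun x => if h : ∃ y, (x, y) ∈ m then h.choose else x

noncomputable def bseq (m : Set (V × V)) (b : V) : ℕ → V
  | 0 => b
  | (j+1) => pLfun m (bseq m b j)

lemma linkableOnto_compl_of_onto_matching {D : V → V → Prop} {B0 : Set V} {m : Set (V × V)}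
    (hm : IsM0Matching (starEdges D B0) (starM0 B0) m)
    (honto : Prod.snd '' m = {v | v ∉ B0}) :
    LinkableOnto D B0 (Prod.fst '' m)ᶜ := by
  classical
  obtain ⟨hbm, hfin⟩ := hm
  have hsubE := hbm.1
  set F := starM0 B0 ∪ m with hF
  have hcast1 : ∀ {i n : ℕ}, ((i:ℕ∞) + 1 ≤ (n:ℕ∞)) ↔ i < n := by
    intro i n
    rw [← Nat.cast_one, ← Nat.cast_add, Nat.cast_le]
    omega
  have hcast2 : ∀ {i n : ℕ}, ((i:ℕ∞) ≤ (n:ℕ∞)) ↔ i ≤ n := fun {i n} => Nat.cast_le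
  have hsnd : ∀ {e : V × V}, e ∈ m → e.2 ∉ B0 := fun he => starEdges_snd' (hsubE he)
  have hstep : ∀ {y : V}, y ∉ B0 → (pRfun m y, y) ∈ m := by
    intro y hy
    have hy' : y ∈ Prod.snd '' m := by rw [honto]; exact hy
    obtain ⟨e, he, he2⟩ := hy'
    have hex : ∃ x, (x, y) ∈ m := ⟨e.1, by rw [← he2, Prod.mk.eta]; exact he⟩
    unfold pRfun
    rw [dif_pos hex]
    exact hex.choose_spec
  have hgen : ∀ (v : V) (i : ℕ), fseq m v i ∉ B0 → (fseq m v (i+1), fseq m v i) ∈ m := by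
    intro v i hi
    show (pRfun m (fseq m v i), fseq m v i) ∈ m
    exact hstep hi
  have hreach : ∀ (v : V) (i : ℕ), (∀ l, l < i → fseq m v l ∉ B0) →
      Relation.ReflTransGen (bipStep F) (.inl v) (.inl (fseq m v i)) := by
    intro v i
    induction i with
    | zero => intro _; exact .refl
    | succ i ih =>
      intro h
      have h1 := ih (fun l hl => h l (Nat.lt_succ_of_lt hl))
      have hi : fseq m v i ∉ B0 := h i (Nat.lt_succ_self i)
      have s1 : bipStep F (.inl (fseq m v i)) (.inr (fseq m v i)) := Or.inl ⟨rfl, hi⟩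
      have s2 : bipStep F (.inr (fseq m v i)) (.inl (fseq m v (i+1))) := Or.inr (hgen v i hi)
      exact (h1.tail s1).tail s2
  have hcross : ∀ (i : ℕ) {v v' : V}, v ∉ Prod.fst '' m → v' ∉ Prod.fst '' m →
      ∀ (j : ℕ), (∀ l, l < i → fseq m v l ∉ B0) → (∀ l, l < j → fseq m v' l ∉ B0) →
      fseq m v i = fseq m v' j → v = v' ∧ i = j := by
    intro i
    induction i with
    | zero =>
      intro v v' hv hv' j h1 h2 heq
      cases j with
      | zero => exact ⟨heq, rfl⟩
      | succ j' =>
        exfalso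
        have hj : fseq m v' j' ∉ B0 := h2 j' (Nat.lt_succ_self j')
        exact hv ⟨(fseq m v' (j'+1), fseq m v' j'), hgen v' j' hj, heq.symm⟩
    | succ i' ih =>
      intro v v' hv hv' j h1 h2 heq
      cases j with
      | zero =>
        exfalso
        have hi : fseq m v i' ∉ B0 := h1 i' (Nat.lt_succ_self i')
        exact hv' ⟨(fseq m v (i'+1), fseq m v i'), hgen v i' hi, heq⟩
      | succ j' =>
        have hi : fseq m v i' ∉ B0 := h1 i' (Nat.lt_succ_self i')
        have hj : fseq m v' j' ∉ B0 := h2 j' (Nat.lt_succ_self j')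
        have e1 := hgen v i' hi
        have e2 := hgen v' j' hj
        rw [heq] at e1
        have heq' : fseq m v i' = fseq m v' j' := matching_fst_eq' hbm e1 e2
        obtain ⟨hvv, hij⟩ := ih hv hv' j' (fun l hl => h1 l (Nat.lt_succ_of_lt hl))
          (fun l hl => h2 l (Nat.lt_succ_of_lt hl)) heq'
        exact ⟨hvv, by omega⟩
  have hterm : ∀ {v : V}, v ∉ Prod.fst '' m → ∃ k, fseq m v k ∈ B0 := by
    intro v hv
    by_contra hno
    push_neg at hno
    have hinj : Function.Injective (fun i : ℕ => (Sum.inl (fseq m v i) : V ⊕ V)) := by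
      intro i j h
      simp only [Sum.inl.injEq] at h
      exact (hcross i hv hv j (fun l _ => hno l) (fun l _ => hno l) h).2
    have hsubr : Set.range (fun i : ℕ => (Sum.inl (fseq m v i) : V ⊕ V)) ⊆
        {z | Relation.ReflTransGen (bipStep F) (.inl v) z} := by
      rintro z ⟨i, rfl⟩
      exact hreach v i (fun l _ => hno l)
    exact Set.infinite_range_of_injective hinj ((hfin (.inl v)).subset hsubr)
  let hit : V → ℕ := fun v => if h : ∃ k, fseq m v k ∈ B0 then Nat.find h else 0
  have hhit : ∀ {v : V}, v ∉ Prod.fst '' m →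
      fseq m v (hit v) ∈ B0 ∧ ∀ l, l < hit v → fseq m v l ∉ B0 := by
    intro v hv
    have hex := hterm hv
    simp only [hit, dif_pos hex]
    exact ⟨Nat.find_spec hex, fun l hl => Nat.find_min hex hl⟩
  let walk : V → DiWalk V := fun v => ⟨fseq m v, (hit v : ℕ∞)⟩
  refine ⟨walk '' (Prod.fst '' m)ᶜ, ⟨⟨?_, ?_⟩, ?_⟩, ?_, ?_⟩
  · rintro q ⟨v, hv, rfl⟩
    constructor
    · intro i hi
      have hi' : i < hit v := hcast1.mp hi
      have hiB := (hhit hv).2 i hi'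
      have hedge := hgen v i hiB
      rcases hsubE hedge with ⟨heq, -⟩ | ⟨hD, -⟩
      · exfalso
        have hcc := hcross (i+1) hv hv i (fun l hl => (hhit hv).2 l (by omega))
          (fun l hl => (hhit hv).2 l (by omega)) heq
        omega
      · exact hD
    · intro i j hi hj heq
      exact (hcross i hv hv j
        (fun l hl => (hhit hv).2 l (lt_of_lt_of_le hl (hcast2.mp hi)))
        (fun l hl => (hhit hv).2 l (lt_of_lt_of_le hl (hcast2.mp hj))) heq).2
  · rintro p ⟨v, hv, rfl⟩ q ⟨v', hv', rfl⟩ hne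
    have hvv : v ≠ v' := fun h => hne (by rw [h])
    rw [Set.disjoint_left]
    rintro x ⟨i, hi, rfl⟩ ⟨j, hj, hx⟩
    exact hvv (hcross i hv hv' j
      (fun l hl => (hhit hv).2 l (lt_of_lt_of_le hl (hcast2.mp hi)))
      (fun l hl => (hhit hv').2 l (lt_of_lt_of_le hl (hcast2.mp hj))) hx.symm).1
  · rintro q ⟨v, hv, rfl⟩
    constructor
    · exact fun h => (ENat.coe_ne_top (hit v)) h
    · show fseq m v (((hit v : ℕ∞)).toNat) ∈ B0
      rw [ENat.toNat_coe]
      exact (hhit hv).1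
  · rw [IniSet, ← Set.image_comp]
    have hcomp : (DiWalk.Ini ∘ walk) = id := funext fun v => rfl
    rw [hcomp, Set.image_id]
  · apply Set.Subset.antisymm
    · rintro x ⟨q, ⟨v, hv, rfl⟩, -, rfl⟩
      show fseq m v (((hit v : ℕ∞)).toNat) ∈ B0
      rw [ENat.toNat_coe]
      exact (hhit hv).1
    · intro b hb
      by_cases hbv : b ∈ Prod.fst '' m
      case neg =>
        have hhb := hhit hbv
        have hz : hit b = 0 := by
          by_contra h0
          exact (hhb.2 0 (Nat.pos_of_ne_zero h0)) hb
        refine ⟨walk b, ⟨b, hbv, rfl⟩, fun h => (ENat.coe_ne_top (hit b)) h, ?_⟩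
        show fseq m b (((hit b : ℕ∞)).toNat) = b
        rw [ENat.toNat_coe, hz]
        rfl
      case pos =>
        have hbgen : ∀ j : ℕ, bseq m b j ∈ Prod.fst '' m →
            (bseq m b j, bseq m b (j+1)) ∈ m := by
          intro j hj
          obtain ⟨e, he, he1⟩ := hj
          have hex : ∃ y, (bseq m b j, y) ∈ m := ⟨e.2, by rw [← he1, Prod.mk.eta]; exact he⟩
          show (bseq m b j, pLfun m (bseq m b j)) ∈ m
          unfold pLfun
          rw [dif_pos hex]
          exact hex.choose_spec
        have hterm2 : ∃ l, bseq m b l ∉ Prod.fst '' m := by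
          by_contra hno
          push_neg at hno
          have hgen2 : ∀ j, (bseq m b j, bseq m b (j+1)) ∈ m := fun j => hbgen j (hno j)
          have hnB0' : ∀ j, bseq m b (j+1) ∉ B0 := fun j => hsnd (hgen2 j)
          have hreach2 : ∀ j, Relation.ReflTransGen (bipStep F) (.inl b) (.inl (bseq m b j)) := by
            intro j
            induction j with
            | zero => exact .refl
            | succ j ih =>
              have s1 : bipStep F (.inl (bseq m b j)) (.inr (bseq m b (j+1))) :=
                Or.inr (hgen2 j)
              have s2 : bipStep F (.inr (bseq m b (j+1))) (.inl (bseq m b (j+1))) :=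
                Or.inl ⟨rfl, hnB0' j⟩
              exact (ih.tail s1).tail s2
          have haux : ∀ i t : ℕ, bseq m b i = bseq m b (i + t + 1) → False := by
            intro i
            induction i with
            | zero =>
              intro t h
              apply hsnd (hgen2 t)
              show bseq m b (t+1) ∈ B0
              rw [show t + 1 = 0 + t + 1 by omega, ← h]
              exact hb
            | succ i ih =>
              intro t h
              have e1 := hgen2 i
              have e2 := hgen2 (i + t + 1)
              have h' : bseq m b (i+1) = bseq m b ((i+t+1)+1) := by
                rw [h]; congr 1; omega
              rw [← h'] at e2
              exact ih t (matching_snd_eq' hbm e1 e2)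
          have hinj2 : Function.Injective (fun j : ℕ => (Sum.inl (bseq m b j) : V ⊕ V)) := by
            intro i j h
            simp only [Sum.inl.injEq] at h
            by_contra hne
            rcases Nat.lt_or_ge i j with hlt | hge
            · exact haux i (j - i - 1) (by rw [show i + (j-i-1) + 1 = j by omega]; exact h)
            · have hlt : j < i := by omega
              exact haux j (i - j - 1) (by rw [show j + (i-j-1) + 1 = i by omega]; exact h.symm)
          exact Set.infinite_range_of_injective hinj2
            ((hfin (.inl b)).subset (by rintro z ⟨j, rfl⟩; exact hreach2 j))
        have hl := Nat.find_spec hterm2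
        set l := Nat.find hterm2 with hldef
        have hl1 : l ≠ 0 := by
          intro h0
          rw [h0] at hl
          exact hl hbv
        have hbedge : ∀ j, j < l → (bseq m b j, bseq m b (j+1)) ∈ m :=
          fun j hj => hbgen j (not_not.mp (Nat.find_min hterm2 hj))
        have hbnB0 : ∀ j, 1 ≤ j → j ≤ l → bseq m b j ∉ B0 := by
          intro j h1 h2
          have he := hbedge (j-1) (by omega)
          rw [show j - 1 + 1 = j by omega] at he
          exact hsnd he
        have hvI : bseq m b l ∉ Prod.fst '' m := hl
        have hrel : ∀ j, j ≤ l → fseq m (bseq m b l) j = bseq m b (l - j) := by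
          intro j
          induction j with
          | zero => intro _; rw [Nat.sub_zero]; rfl
          | succ j ih =>
            intro hj
            have hj' : j ≤ l := by omega
            have hrj := ih hj'
            show pRfun m (fseq m (bseq m b l) j) = bseq m b (l - (j+1))
            rw [hrj]
            have hedge : (bseq m b (l - j - 1), bseq m b (l - j)) ∈ m := by
              have he := hbedge (l - j - 1) (by omega)
              rwa [show l - j - 1 + 1 = l - j by omega] at he
            have hex : ∃ x, (x, bseq m b (l - j)) ∈ m := ⟨_, hedge⟩
            unfold pRfun
            rw [dif_pos hex]
            have hcs := hex.choose_spec
            rw [matching_snd_eq' hbm hcs hedge]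
            congr 1
        have hhv := hhit hvI
        have hfse : fseq m (bseq m b l) l = b := by
          rw [hrel l (le_refl l), Nat.sub_self]
          rfl
        have hhitl : hit (bseq m b l) = l := by
          rcases Nat.lt_trichotomy (hit (bseq m b l)) l with h | h | h
          · exfalso
            have hfB := hhv.1
            rw [hrel (hit (bseq m b l)) (by omega)] at hfB
            exact hbnB0 (l - hit (bseq m b l)) (by omega) (by omega) hfB
          · exact h
          · exfalso
            apply hhv.2 l h
            rw [hfse]
            exact hb
        refine ⟨walk (bseq m b l), ⟨bseq m b l, hvI, rfl⟩,
          fun h => (ENat.coe_ne_top _) h, ?_⟩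
        show fseq m (bseq m b l) (((hit (bseq m b l) : ℕ∞)).toNat) = b
        rw [ENat.toNat_coe, hhitl, hfse]

/-! ### L1: from a linkage to an onto matching -/

lemma matching_of_linkage {D : V → V → Prop} {B0 : Set V} (hDim : IsDimaze D B0)
    {Q : Set (DiWalk V)} (hQ : IsLinkage D B0 Q) :
    ∃ m, IsM0Matching (starEdges D B0) (starM0 B0) m ∧
      Prod.snd '' m = {v | v ∉ B0} ∧
      (∀ x ∈ Prod.fst '' m, x ∉ IniSet Q) ∧
      (TerSet Q = B0 → (IniSet Q)ᶜ ⊆ Prod.fst '' m) := by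
  classical
  obtain ⟨⟨hpath, hdisj⟩, hend⟩ := hQ
  have hle1 : ∀ {i : ℕ} {n : ℕ∞}, (i:ℕ∞) + 1 ≤ n → (i:ℕ∞) ≤ n :=
    fun {i n} h => le_trans le_self_add h
  have hsucc : ∀ {i : ℕ} {n : ℕ∞}, (i:ℕ∞) + 1 ≤ n → ((i+1 : ℕ):ℕ∞) ≤ n := by
    intro i n h
    push_cast
    exact h
  have hsupp : ∀ (q : DiWalk V) (i : ℕ), (i:ℕ∞) ≤ q.len → q.vtx i ∈ q.support :=
    fun q i h => ⟨i, h, rfl⟩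
  have hsame : ∀ {q : DiWalk V}, q ∈ Q → ∀ {q' : DiWalk V}, q' ∈ Q → ∀ {i j : ℕ},
      (i:ℕ∞) ≤ q.len → (j:ℕ∞) ≤ q'.len → q.vtx i = q'.vtx j → q = q' ∧ i = j := by
    intro q hq q' hq' i j hi hj heq
    by_cases hqq : q = q'
    · subst hqq
      exact ⟨rfl, (hpath q hq).2 i j hi hj heq⟩
    · exfalso
      have h1 := hsupp q i hi
      have h2 := hsupp q' j hj
      rw [heq] at h1
      exact Set.disjoint_left.mp (hdisj q hq q' hq' hqq) h1 h2
  have hintnB0 : ∀ {q : DiWalk V}, q ∈ Q → ∀ {i : ℕ}, (i:ℕ∞) + 1 ≤ q.len →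
      q.vtx i ∉ B0 := by
    intro q hq i hi hB
    exact hDim _ hB _ ((hpath q hq).1 i hi)
  have hvset : ∀ {q : DiWalk V}, q ∈ Q → ∀ {i : ℕ}, (i:ℕ∞) ≤ q.len →
      q.vtx i ∈ VSet Q := by
    intro q hq i hi
    exact Set.mem_biUnion hq (hsupp q i hi)
  have hlenfin : ∀ {q : DiWalk V}, q ∈ Q → ∃ n : ℕ, q.len = (n:ℕ∞) :=
    fun {q} hq => ⟨q.len.toNat, ((ENat.coe_toNat (hend q hq).1).symm)⟩
  refine ⟨{e | ∃ q ∈ Q, ∃ i : ℕ, (i:ℕ∞) + 1 ≤ q.len ∧ e = (q.vtx (i+1), q.vtx i)} ∪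
    {e | ∃ v, e = (v, v) ∧ v ∉ B0 ∧ v ∉ VSet Q}, ⟨⟨?_, ?_⟩, ?_⟩, ?_, ?_, ?_⟩
  · rintro e he
    rcases he with ⟨q, hq, i, hi, rfl⟩ | ⟨v, rfl, hv, -⟩
    · exact Or.inr ⟨(hpath q hq).1 i hi, hintnB0 hq hi⟩
    · exact Or.inl ⟨rfl, hv⟩
  · rintro p hp q hq hor
    rcases hp with ⟨q1, hq1, i, hi, rfl⟩ | ⟨v, rfl, hv, hvn⟩ <;>
      rcases hq with ⟨q2, hq2, j, hj, rfl⟩ | ⟨w, rfl, hw, hwn⟩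
    · rcases hor with h | h
      · obtain ⟨hqq, hij⟩ :=
          hsame hq1 hq2 (hsucc hi) (hsucc hj) (h : q1.vtx (i+1) = q2.vtx (j+1))
        subst hqq
        obtain rfl : i = j := by omega
        rfl
      · obtain ⟨hqq, hij⟩ := hsame hq1 hq2 (hle1 hi) (hle1 hj) (h : q1.vtx i = q2.vtx j)
        subst hqq
        subst hij
        rfl
    · exfalso
      rcases hor with h | h
      · exact hwn (by have h' : q1.vtx (i+1) = w := h; rw [← h']; exact hvset hq1 (hsucc hi))
      · exact hwn (by have h' : q1.vtx i = w := h; rw [← h']; exact hvset hq1 (hle1 hi))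
    · exfalso
      rcases hor with h | h
      · exact hvn (by have h' : v = q2.vtx (j+1) := h; rw [h']; exact hvset hq2 (hsucc hj))
      · exact hvn (by have h' : v = q2.vtx j := h; rw [h']; exact hvset hq2 (hle1 hj))
    · rcases hor with h | h <;> simp only [Prod.mk.injEq] <;> exact ⟨h, h⟩
  · intro x
    obtain ⟨v, hv⟩ : ∃ v : V, x = Sum.inl v ∨ x = Sum.inr v := by
      cases x with
      | inl v => exact ⟨v, Or.inl rfl⟩
      | inr v => exact ⟨v, Or.inr rfl⟩
    by_cases hvV : v ∈ VSet Q
    · rw [VSet, Set.mem_iUnion₂] at hvV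
      obtain ⟨q, hq, i0, hi0, rfl⟩ := hvV
      have hSfin : {z : V ⊕ V | ∃ i : ℕ, (i:ℕ∞) ≤ q.len ∧
          (z = .inl (q.vtx i) ∨ z = .inr (q.vtx i))}.Finite := by
        obtain ⟨nr, hnr⟩ := hlenfin hq
        apply Set.Finite.subset
          (Set.Finite.union ((Set.finite_Iic nr).image (fun i => (Sum.inl (q.vtx i) : V ⊕ V)))
            ((Set.finite_Iic nr).image (fun i => (Sum.inr (q.vtx i) : V ⊕ V))))
        rintro z ⟨i, hi, hz | hz⟩
        · left
          exact ⟨i, by rw [hnr] at hi; exact_mod_cast hi, hz.symm⟩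
        · right
          exact ⟨i, by rw [hnr] at hi; exact_mod_cast hi, hz.symm⟩
      apply hSfin.subset
      intro z hz
      refine reach_closed' ?_ ?_ hz
      · rintro a ⟨i, hi, ha | ha⟩ b hstep
        · subst ha
          cases b with
          | inl t => exact absurd hstep id
          | inr t =>
            rcases hstep with ⟨h1, -⟩ | hmem
            · exact ⟨i, hi, Or.inr (by have h1' : q.vtx i = t := h1; rw [← h1'])⟩
            rcases hmem with ⟨q2, hq2, j, hj, he⟩ | ⟨w, he, hw, hwn⟩
            · have h1 : q.vtx i = q2.vtx (j+1) := congrArg Prod.fst he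
              have h2 : t = q2.vtx j := congrArg Prod.snd he
              obtain ⟨hqq, hij⟩ := hsame hq hq2 hi (hsucc hj) h1
              subst hqq
              exact ⟨j, hle1 hj, Or.inr (by rw [h2])⟩
            · exfalso
              have h1 : q.vtx i = w := congrArg Prod.fst he
              exact hwn (by rw [← h1]; exact hvset hq hi)
        · subst ha
          cases b with
          | inr t => exact absurd hstep id
          | inl t =>
            rcases hstep with ⟨h1, -⟩ | hmem
            · exact ⟨i, hi, Or.inl (by have h1' : t = q.vtx i := h1; rw [h1'])⟩
            rcases hmem with ⟨q2, hq2, j, hj, he⟩ | ⟨w, he, hw, hwn⟩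
            · have h1 : t = q2.vtx (j+1) := congrArg Prod.fst he
              have h2 : q.vtx i = q2.vtx j := congrArg Prod.snd he
              obtain ⟨hqq, hij⟩ := hsame hq hq2 hi (hle1 hj) h2
              subst hqq
              subst hij
              exact ⟨i+1, hsucc hj, Or.inl (by rw [h1])⟩
            · exfalso
              have h2 : q.vtx i = w := congrArg Prod.snd he
              exact hwn (by rw [← h2]; exact hvset hq hi)
      · rcases hv with rfl | rfl
        · exact ⟨i0, hi0, Or.inl rfl⟩
        · exact ⟨i0, hi0, Or.inr rfl⟩
    · by_cases hvB : v ∈ B0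
      · apply Set.Finite.subset (Set.finite_singleton x)
        intro z hz
        refine reach_closed' ?_ rfl hz
        rintro a ha b hstep
        exfalso
        rw [Set.mem_singleton_iff] at ha
        subst ha
        rcases hv with rfl | rfl
        · cases b with
          | inl t => exact hstep
          | inr t =>
            rcases hstep with ⟨-, h2⟩ | hmem
            · exact h2 hvB
            rcases hmem with ⟨q2, hq2, j, hj, he⟩ | ⟨w, he, hw, -⟩
            · apply hvV
              have he' : v = q2.vtx (j+1) := congrArg Prod.fst he
              rw [he']
              exact hvset hq2 (hsucc hj)
            · apply hw
              have he' : v = w := congrArg Prod.fst he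
              rw [← he']
              exact hvB
        · cases b with
          | inr t => exact hstep
          | inl t =>
            rcases hstep with ⟨h1, h2⟩ | hmem
            · apply h2
              have h1' : t = v := h1
              rw [h1']
              exact hvB
            rcases hmem with ⟨q2, hq2, j, hj, he⟩ | ⟨w, he, hw, -⟩
            · apply hvV
              have he' : v = q2.vtx j := congrArg Prod.snd he
              rw [he']
              exact hvset hq2 (hle1 hj)
            · apply hw
              have he' : v = w := congrArg Prod.snd he
              rw [← he']
              exact hvB
      · apply Set.Finite.subset
          ((Set.finite_singleton (Sum.inr v : V ⊕ V)).insert (Sum.inl v))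
        intro z hz
        refine reach_closed'
          (S := ({Sum.inl v, Sum.inr v} : Set (V ⊕ V))) ?_ ?_ hz
        · rintro a ha b hstep
          simp only [Set.mem_insert_iff, Set.mem_singleton_iff] at ha
          simp only [Set.mem_insert_iff, Set.mem_singleton_iff]
          rcases ha with rfl | rfl
          · cases b with
            | inl t => exact absurd hstep id
            | inr t =>
              rcases hstep with ⟨h1, -⟩ | hmem
              · right
                exact congrArg Sum.inr (h1 : v = t).symm
              rcases hmem with ⟨q2, hq2, j, hj, he⟩ | ⟨w, he, hw, hwn⟩
              · exfalso
                apply hvV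
                have he' : v = q2.vtx (j+1) := congrArg Prod.fst he
                rw [he']
                exact hvset hq2 (hsucc hj)
              · right
                have h1 : v = w := congrArg Prod.fst he
                have h2 : t = w := congrArg Prod.snd he
                rw [h2, ← h1]
          · cases b with
            | inr t => exact absurd hstep id
            | inl t =>
              rcases hstep with ⟨h1, -⟩ | hmem
              · left
                exact congrArg Sum.inl (h1 : t = v)
              rcases hmem with ⟨q2, hq2, j, hj, he⟩ | ⟨w, he, hw, hwn⟩
              · exfalso
                apply hvV
                have he' : v = q2.vtx j := congrArg Prod.snd he
                rw [he']
                exact hvset hq2 (hle1 hj)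
              · left
                have h1 : t = w := congrArg Prod.fst he
                have h2 : v = w := congrArg Prod.snd he
                rw [h1, ← h2]
        · rcases hv with rfl | rfl
          · exact Set.mem_insert _ _
          · exact Set.mem_insert_iff.mpr (Or.inr rfl)
  · apply Set.Subset.antisymm
    · rintro y ⟨e, he, rfl⟩
      rcases he with ⟨q, hq, i, hi, rfl⟩ | ⟨w, rfl, hw, -⟩
      · exact hintnB0 hq hi
      · exact hw
    · intro y hy
      by_cases hyV : y ∈ VSet Q
      · rw [VSet, Set.mem_iUnion₂] at hyV
        obtain ⟨q, hq, i, hi, rfl⟩ := hyV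
        by_cases hlt : (i:ℕ∞) + 1 ≤ q.len
        · exact ⟨(q.vtx (i+1), q.vtx i), Or.inl ⟨q, hq, i, hlt, rfl⟩, rfl⟩
        · exfalso
          obtain ⟨nr, hnr⟩ := hlenfin hq
          have hi' : i ≤ nr := by rw [hnr] at hi; exact_mod_cast hi
          have hieq : i = nr := by
            rcases Nat.lt_or_ge i nr with h | h
            · exfalso
              apply hlt
              rw [hnr]
              have h' : i + 1 ≤ nr := Nat.succ_le_of_lt h
              exact_mod_cast h'
            · omega
          apply hy
          have hTer : q.vtx i = q.Ter := by
            show q.vtx i = q.vtx q.len.toNat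
            rw [hnr, ENat.toNat_coe, hieq]
          rw [hTer]
          exact (hend q hq).2
      · exact ⟨(y, y), Or.inr ⟨y, rfl, hy, hyV⟩, rfl⟩
  · rintro x ⟨e, he, rfl⟩ hxI
    obtain ⟨q', hq', hIni⟩ := hxI
    rcases he with ⟨q, hq, i, hi, rfl⟩ | ⟨w, rfl, hw, hwn⟩
    · have h0 : ((0:ℕ):ℕ∞) ≤ q'.len := by simp
      obtain ⟨-, hij⟩ := hsame hq hq' (hsucc hi) h0
        (show q.vtx (i+1) = q'.vtx 0 from hIni.symm)
      exact Nat.succ_ne_zero i hij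
    · apply hwn
      have hIni' : q'.Ini = w := hIni
      rw [← hIni']
      have h0 : ((0:ℕ):ℕ∞) ≤ q'.len := by simp
      exact hvset hq' h0
  · intro hTer x hx
    by_cases hxV : x ∈ VSet Q
    · rw [VSet, Set.mem_iUnion₂] at hxV
      obtain ⟨q, hq, i, hi, rfl⟩ := hxV
      cases i with
      | zero => exact absurd ⟨q, hq, rfl⟩ hx
      | succ j =>
        have hj : (j:ℕ∞) + 1 ≤ q.len := by
          have h' : ((j+1:ℕ):ℕ∞) ≤ q.len := hi
          push_cast at h'
          exact h'
        exact ⟨(q.vtx (j+1), q.vtx j), Or.inl ⟨q, hq, j, hj, rfl⟩, rfl⟩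
    · by_cases hxB : x ∈ B0
      · exfalso
        rw [← hTer] at hxB
        obtain ⟨q, hq, hnr, hTq⟩ := hxB
        apply hxV
        rw [← hTq]
        have hle : (q.len.toNat : ℕ∞) ≤ q.len := le_of_eq (ENat.coe_toNat hnr)
        exact hvset hq hle
      · exact ⟨(x, x), Or.inr ⟨x, rfl, hxB, hxV⟩, rfl⟩

/-! ### L4: maximal linkable sets are linkable onto -/

lemma maximal_linkable_linkableOnto {D : V → V → Prop} {B0 : Set V}
    (hDim : IsDimaze D B0) {I : Set V} (hlink : Linkable D B0 I)
    (hmax : ∀ I', Linkable D B0 I' → I ⊆ I' → I = I') :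
    LinkableOnto D B0 I := by
  classical
  obtain ⟨Q, hQ, hIni⟩ := hlink
  obtain ⟨⟨hpath, hdisj⟩, hend⟩ := hQ
  refine ⟨Q, ⟨⟨hpath, hdisj⟩, hend⟩, hIni, ?_⟩
  apply Set.Subset.antisymm
  · rintro x ⟨q, hq, -, rfl⟩
    exact (hend q hq).2
  · intro b hb
    by_contra hbT
    have hbV : b ∉ VSet Q := by
      intro hbV
      rw [VSet, Set.mem_iUnion₂] at hbV
      obtain ⟨q, hq, i, hi, hveq⟩ := hbV
      obtain ⟨nr, hnr⟩ : ∃ n : ℕ, q.len = (n:ℕ∞) :=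
        ⟨q.len.toNat, ((ENat.coe_toNat (hend q hq).1).symm)⟩
      have hi' : i ≤ nr := by rw [hnr] at hi; exact_mod_cast hi
      rcases Nat.lt_or_ge i nr with hlt | hge
      · have hlt' : (i:ℕ∞) + 1 ≤ q.len := by
          rw [hnr]
          have h' : i + 1 ≤ nr := Nat.succ_le_of_lt hlt
          exact_mod_cast h'
        have hD := (hpath q hq).1 i hlt'
        rw [hveq] at hD
        exact hDim b hb _ hD
      · have hieq : i = nr := by omega
        apply hbT
        refine ⟨q, hq, (hend q hq).1, ?_⟩
        show q.vtx q.len.toNat = b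
        rw [hnr, ENat.toNat_coe, ← hieq, hveq]
    have hbI : b ∉ I := by
      intro hbI
      rw [← hIni] at hbI
      obtain ⟨q, hq, hqIni⟩ := hbI
      apply hbV
      rw [← hqIni]
      exact Set.mem_biUnion hq ⟨0, by simp, rfl⟩
    have hdisjt : ∀ q ∈ Q, Disjoint (DiWalk.mk (fun _ => b) 0).support q.support := by
      intro q hq
      rw [Set.disjoint_left]
      rintro x ⟨i, -, rfl⟩ hx'
      exact hbV (Set.mem_biUnion hq hx')
    have hlink' : Linkable D B0 (insert b I) := by
      refine ⟨insert (DiWalk.mk (fun _ => b) 0) Q, ⟨⟨?_, ?_⟩, ?_⟩, ?_⟩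
      · rintro q (rfl | hq)
        · constructor
          · intro i hi
            exfalso
            have h1 : (1:ℕ∞) ≤ 0 := le_trans le_add_self hi
            simp at h1
          · intro i j hi hj _
            have hi0 : i = 0 := by
              have h2 : (i:ℕ∞) ≤ (0:ℕ∞) := hi
              have h' := le_antisymm h2 (zero_le)
              exact_mod_cast h'
            have hj0 : j = 0 := by
              have h2 : (j:ℕ∞) ≤ (0:ℕ∞) := hj
              have h' := le_antisymm h2 (zero_le)
              exact_mod_cast h'
            rw [hi0, hj0]
        · exact hpath q hq
      · rintro p (rfl | hp) q' (rfl | hq') hne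
        · exact absurd rfl hne
        · exact hdisjt q' hq'
        · exact (hdisjt p hp).symm
        · exact hdisj p hp q' hq' hne
      · rintro q (rfl | hq)
        · refine ⟨?_, hb⟩
          intro hray
          exact (by simp : (0:ℕ∞) ≠ ⊤) hray
        · exact hend q hq
      · show DiWalk.Ini '' insert (DiWalk.mk (fun _ => b) 0) Q = insert b I
        have hIni2 : DiWalk.Ini '' Q = I := hIni
        rw [Set.image_insert_eq, hIni2]
        rfl
    have heq := hmax (insert b I) hlink' (Set.subset_insert b I)
    apply hbI
    rw [heq]
    exact Set.mem_insert b I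

end DaggerAux

theorem dagger_iff_ddagger {V : Type*} (D : V → V → Prop) (B0 : Set V)
    (hDim : IsDimaze D B0) :
    DaggerProp D B0 ↔ DDaggerProp (starEdges D B0) (starM0 B0) {v | v ∉ B0} := by
  classical
  constructor
  · -- (†) implies (‡)
    intro hd
    have hac : ∀ m m' : Set (V × V), IsM0Matching (starEdges D B0) (starM0 B0) m →
        IsM0Matching (starEdges D B0) (starM0 B0) m' →
        Prod.snd '' m = {v | v ∉ B0} → Prod.snd '' m' = {v | v ∉ B0} →
        Prod.fst '' m ⊆ Prod.fst '' m' → Prod.fst '' m = Prod.fst '' m' := by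
      intro m m' hm hm' hsnd hsnd' hsub
      have ho := linkableOnto_compl_of_onto_matching hm hsnd
      have ho' := linkableOnto_compl_of_onto_matching hm' hsnd'
      have hmaxpair := (hd ((Prod.fst '' m')ᶜ)).mpr ho'
      obtain ⟨Q, hQl, hQi, -⟩ := ho
      have hlink : Linkable D B0 ((Prod.fst '' m)ᶜ) := ⟨Q, hQl, hQi⟩
      have heq := hmaxpair.2 ((Prod.fst '' m)ᶜ) hlink (Set.compl_subset_compl.mpr hsub)
      rw [← compl_compl (Prod.fst '' m), ← heq, compl_compl]
    intro J
    constructor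
    · rintro ⟨⟨m'', hm'', rfl⟩, hmax⟩
      obtain ⟨m, hm, hsnd, hfst⟩ := exists_onto_matching_extension hm''
      have heq := hmax (Prod.fst '' m) ⟨m, hm, rfl⟩ hfst
      exact ⟨m, hm, heq.symm, hsnd⟩
    · rintro ⟨m, hm, rfl, hsnd⟩
      refine ⟨⟨m, hm, rfl⟩, ?_⟩
      rintro J' ⟨m'', hm'', rfl⟩ hsub
      obtain ⟨m₂, hm₂, hsnd₂, hfst₂⟩ := exists_onto_matching_extension hm''
      have h := hac m m₂ hm hm₂ hsnd hsnd₂ (hsub.trans hfst₂)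
      exact Set.Subset.antisymm hsub (hfst₂.trans (subset_of_eq h.symm))
  · -- (‡) implies (†)
    intro hdd
    have hac : ∀ m m' : Set (V × V), IsM0Matching (starEdges D B0) (starM0 B0) m →
        IsM0Matching (starEdges D B0) (starM0 B0) m' →
        Prod.snd '' m = {v | v ∉ B0} → Prod.snd '' m' = {v | v ∉ B0} →
        Prod.fst '' m ⊆ Prod.fst '' m' → Prod.fst '' m = Prod.fst '' m' := by
      intro m m' hm hm' hsnd hsnd' hsub
      have h1 := (hdd (Prod.fst '' m)).mpr ⟨m, hm, rfl, hsnd⟩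
      exact h1.2 (Prod.fst '' m') ⟨m', hm', rfl⟩ hsub
    intro I
    constructor
    · rintro ⟨hlink, hmax⟩
      exact maximal_linkable_linkableOnto hDim hlink hmax
    · intro ho
      obtain ⟨Q, hQ, hIni, hTer⟩ := ho
      refine ⟨⟨Q, hQ, hIni⟩, ?_⟩
      intro I' hI' hsub
      obtain ⟨m₁, hm₁, hsnd₁, hdis₁, hfull₁⟩ := matching_of_linkage hDim hQ
      obtain ⟨Q', hQ', hIni'⟩ := hI'
      obtain ⟨m₂, hm₂, hsnd₂, hdis₂, -⟩ := matching_of_linkage hDim hQ'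
      have hfm₁ : Prod.fst '' m₁ = Iᶜ := by
        apply Set.Subset.antisymm
        · intro x hx
          have h := hdis₁ x hx
          rw [hIni] at h
          exact h
        · rw [← hIni]
          exact hfull₁ hTer
      have hsub₂ : Prod.fst '' m₂ ⊆ Prod.fst '' m₁ := by
        intro x hx
        rw [hfm₁]
        have h := hdis₂ x hx
        rw [hIni'] at h
        exact fun hxI => h (hsub hxI)
      have hfeq := hac m₂ m₁ hm₂ hm₁ hsnd₂ hsnd₁ hsub₂
      apply Set.Subset.antisymm hsub
      intro x hxI'
      by_contra hxnotI
      have hxc : x ∈ Prod.fst '' m₂ := by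
        rw [hfeq, hfm₁]
        exact hxnotI
      have h := hdis₂ x hxc
      rw [hIni'] at h
      exact h hxI'
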